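/- Let S be a finite nonempty multiset of primitive strings, for each w ∈ S let v_w be the unique conjugate of w that is a Lyndon word, and let T be the concatenation of the strings v_w (w ranging over S with multiplicity) arranged in ≺_lex-non-increasing order. Then BBWT(T) = eBWT(S). -/

import Mathlib

open List

variable {α : Type*} [LinearOrder α]

/-- A nonempty string is a Lyndon word if it is lexicographically strictly smaller than
each of its nonempty proper suffixes. -/
def IsLyndon (w : List α) : Prop :=
  w ≠ [] ∧ ∀ s : List α, s ≠ [] → s ≠ w → s <:+ w → List.Lex (· < ·) w s

/-- Lexicographic order on infinite words `ℕ → α`. -/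
def InfLexLt (u v : ℕ → α) : Prop :=
  ∃ n : ℕ, (∀ m < n, u m = v m) ∧ u n < v n

/-- The infinite periodic word `S^ω` associated with a (nonempty) string `S`. -/
def omegaWord [Inhabited α] (S : List α) : ℕ → α :=
  fun n => S.getD (n % S.length) default

/-- `S ≺_ω T` iff `S^ω` is lexicographically smaller than `T^ω`. -/
def OmegaLt [Inhabited α] (S T : List α) : Prop :=
  InfLexLt (omegaWord S) (omegaWord T)

open Classical in
/-- The length of the longest Lyndon prefix of `T`. -/
noncomputable def lynPrefixLen (T : List α) : ℕ :=
  sSup {k | k ≤ T.length ∧ IsLyndon (T.take k)}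

/-- Greedy computation of the Lyndon factorization (with fuel). -/
noncomputable def lynGo : ℕ → List α → List (List α)
  | 0, _ => []
  | n + 1, T =>
    if T = [] then []
    else T.take (max 1 (lynPrefixLen T)) :: lynGo n (T.drop (max 1 (lynPrefixLen T)))

/-- The Lyndon factorization of `T`: repeatedly cut off the longest Lyndon prefix. -/
noncomputable def lyndonFactorization (T : List α) : List (List α) :=
  lynGo T.length T

open Classical in
/-- The bijective Burrows–Wheeler transform: last characters of all conjugates of all
Lyndon factors of `T`, listed in `≺_ω`-nondecreasing order. -/
noncomputable def BBWT [Inhabited α] (T : List α) : List α :=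
  (((lyndonFactorization T).flatMap
      (fun w => (List.range w.length).map (fun i => w.drop i ++ w.take i))).mergeSort
      (fun a b => decide (¬ OmegaLt b a))).map (fun w => w.getLastD default)

/-- A nonempty string is primitive if it is not a proper power `u^k` with `k ≥ 2`. -/
def IsPrimitive (w : List α) : Prop :=
  w ≠ [] ∧ ∀ u : List α, ∀ k : ℕ, 2 ≤ k → w ≠ (List.replicate k u).flatten

open Classical in
/-- The extended Burrows–Wheeler transform of a multiset (given as a list) `S` of
primitive strings: last characters of all conjugates of all elements of `S`, listed in
`≺_ω`-nondecreasing order. -/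
noncomputable def eBWT [Inhabited α] (S : List (List α)) : List α :=
  ((S.flatMap (fun w => (List.range w.length).map (fun i => w.drop i ++ w.take i))).mergeSort
      (fun a b => decide (¬ OmegaLt b a))).map (fun w => w.getLastD default)

local notation "LexLt" => List.Lex (· < · : α → α → Prop)
lemma prefix_flatten_decomp : ∀ (l : List (List α)) (p : List α), p <+: l.flatten →
    p = l.flatten ∨ ∃ pre x suf u, l = pre ++ x :: suf ∧ p = pre.flatten ++ u ∧
      u <+: x ∧ u.length < x.length := by
  intro l
  induction l with
  | nil => intro p hp; left; simpa using List.prefix_nil.1 (by simpa using hp)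
  | cons x l' ih =>
    intro p hp
    rw [flatten_cons] at hp
    by_cases hlen : p.length < x.length
    · right
      refine ⟨[], x, l', p, rfl, by simp, ?_, hlen⟩
      exact prefix_of_prefix_length_le hp (prefix_append x l'.flatten) (le_of_lt hlen)
    · push_neg at hlen
      have hx : x <+: p :=
        prefix_of_prefix_length_le (prefix_append x l'.flatten) hp hlen
      obtain ⟨p', rfl⟩ := hx
      have hp' : p' <+: l'.flatten := (prefix_append_right_inj x).1 hp
      rcases ih p' hp' with h | ⟨pre, y, suf, u, rfl, hpeq, hux, hlt⟩
      · left; rw [h, flatten_cons]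
      · right
        exact ⟨x :: pre, y, suf, u, rfl, by rw [hpeq, flatten_cons, append_assoc], hux, hlt⟩

lemma lexlt_append' (u t : List α) (h : t ≠ []) : LexLt u (u ++ t) := by
  induction u with
  | nil => cases t with
    | nil => exact absurd rfl h
    | cons a l => exact List.Lex.nil
  | cons a l ih => exact List.Lex.cons ih

lemma not_lexlt_append' (u t : List α) : ¬ LexLt (u ++ t) u := by
  induction u with
  | nil => exact List.not_lex_nil
  | cons a l ih =>
    intro h
    rcases List.cons_lex_cons_iff.1 h with h' | ⟨_, h'⟩
    · exact lt_irrefl _ h'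
    · exact ih h'

lemma nlt_trans' {a b c : List α} (h1 : ¬ LexLt b a) (h2 : ¬ LexLt c b) : ¬ LexLt c a := by
  intro h
  rcases trichotomous_of (List.Lex (· < · : α → α → Prop)) b c with h' | rfl | h'
  · exact h1 (List.lex_trans lt_trans h' h)
  · exact h1 h
  · exact h2 h'

lemma nlt_of_prefix' {u x : List α} (h : u <+: x) : ¬ LexLt x u := by
  obtain ⟨t, rfl⟩ := h
  exact not_lexlt_append' u t

lemma lyndon_chain_absurd {p s w y : List α} (hyw : ¬ LexLt w y) (hsy : s <+: y)
    (hwp : w <+: p) (hlex : LexLt p s) : False :=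
  (nlt_trans' (nlt_trans' (nlt_of_prefix' hsy) hyw) (nlt_of_prefix' hwp)) hlex

lemma lyndon_prefix_le {w : List α} (hw : IsLyndon w) (rest : List (List α))
    (hrest : ∀ x ∈ rest, IsLyndon x ∧ ¬ LexLt w x)
    {p : List α} (hp : IsLyndon p) (hpre : p <+: (w :: rest).flatten) :
    p.length ≤ w.length := by
  have hwne : w ≠ [] := hw.1
  have hwpos : 0 < w.length := length_pos_iff.2 hwne
  rcases prefix_flatten_decomp _ p hpre with h | ⟨pre, x, suf, u, hsplit, hpeq, hux, hlt⟩
  · -- p is the whole flatten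
    rcases eq_nil_or_concat rest with rfl | ⟨r'', s, hre⟩
    · simp [h]
    · exfalso
      rw [concat_eq_append] at hre
      subst hre
      obtain ⟨hsl, hsw⟩ := hrest s (by simp)
      have hsuf : s <:+ p := by
        rw [h, flatten_cons, flatten_append]
        simp only [flatten_cons, flatten_nil, append_nil]
        rw [← append_assoc]
        exact suffix_append _ _
      have hslen : s.length < p.length := by
        rw [h]
        simp only [flatten_cons, flatten_append, flatten_nil, length_append, append_nil]
        omega
      have hlex : LexLt p s := hp.2 s hsl.1 (by intro hh; rw [hh] at hslen; omega) hsuf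
      exact lyndon_chain_absurd hsw prefix_rfl
        (by rw [h, flatten_cons]; exact prefix_append _ _) hlex
  · cases pre with
    | nil =>
      have hxw : x = w := (List.cons_eq_cons.1 (by simpa using hsplit)).1.symm
      simp only [flatten_nil, nil_append] at hpeq
      have h1 : p.length = u.length := by rw [hpeq]
      have h2 : x.length = w.length := by rw [hxw]
      omega
    | cons a pre' =>
      have hsplit' : w = a ∧ rest = pre' ++ x :: suf := List.cons_eq_cons.1 (by simpa using hsplit)
      have ha : a = w := hsplit'.1.symm
      have hrest_eq : rest = pre' ++ x :: suf := hsplit'.2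
      rw [ha] at hpeq
      obtain ⟨hxl, hxw⟩ := hrest x (by rw [hrest_eq]; simp)
      have hwp : w <+: p := by
        rw [hpeq, flatten_cons, append_assoc]
        exact prefix_append _ _
      by_cases hu : u = []
      · subst hu
        rcases eq_nil_or_concat pre' with rfl | ⟨q, s, hq⟩
        · simp only [flatten_cons, flatten_nil, append_nil] at hpeq
          simp [hpeq]
        · exfalso
          rw [concat_eq_append] at hq
          subst hq
          obtain ⟨hsl, hsw⟩ := hrest s (by rw [hrest_eq]; simp)
          have hpeq' : p = w ++ (q.flatten ++ s) := by
            rw [hpeq]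
            simp [flatten_append, append_assoc]
          have hsuf : s <:+ p := by rw [hpeq', ← append_assoc]; exact suffix_append _ _
          have hslen : s.length < p.length := by
            rw [hpeq']; simp only [length_append]; omega
          have hlex : LexLt p s := hp.2 s hsl.1 (by intro hh; rw [hh] at hslen; omega) hsuf
          exact lyndon_chain_absurd hsw prefix_rfl hwp hlex
      · exfalso
        have hsuf : u <:+ p := hpeq ▸ suffix_append _ _
        have hulen : u.length < p.length := by
          have : p.length = w.length + pre'.flatten.length + u.length := by
            rw [hpeq]; simp only [flatten_cons, length_append]
          omega
        have hlex : LexLt p u := hp.2 u hu (by intro hh; rw [hh] at hulen; omega) hsuf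
        exact lyndon_chain_absurd hxw hux hwp hlex
lemma lynPrefixLen_eq {w : List α} (hw : IsLyndon w) (rest : List (List α))
    (hrest : ∀ x ∈ rest, IsLyndon x ∧ ¬ LexLt w x) :
    lynPrefixLen (w ++ rest.flatten) = w.length := by
  have hwlen : w.length ≤ (w ++ rest.flatten).length := by simp
  have hmem : w.length ∈ {k | k ≤ (w ++ rest.flatten).length ∧
      IsLyndon ((w ++ rest.flatten).take k)} := by
    refine ⟨hwlen, ?_⟩
    rw [take_left]
    exact hw
  apply _root_.le_antisymm
  · apply csSup_le ⟨w.length, hmem⟩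
    rintro k ⟨hk1, hk2⟩
    have hkpre : (w ++ rest.flatten).take k <+: (w :: rest).flatten := by
      rw [flatten_cons]; exact take_prefix _ _
    have := lyndon_prefix_le hw rest hrest hk2 hkpre
    rwa [length_take, min_eq_left hk1] at this
  · apply le_csSup ?_ hmem
    exact ⟨(w ++ rest.flatten).length, fun k hk => hk.1⟩

lemma lynGo_flatten : ∀ (fuel : ℕ) (L : List (List α)),
    (∀ x ∈ L, IsLyndon x) → L.Chain' (fun a b => ¬ LexLt a b) →
    L.flatten.length ≤ fuel → lynGo fuel L.flatten = L := by
  intro fuel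
  induction fuel with
  | zero =>
    intro L h hc hlen
    cases L with
    | nil => simp [lynGo]
    | cons w r =>
      exfalso
      have := (h w (by simp)).1
      have : 0 < w.length := length_pos_iff.2 this
      simp only [flatten_cons, length_append] at hlen
      omega
  | succ n ih =>
    intro L h hc hlen
    cases L with
    | nil => simp [lynGo]
    | cons w rest =>
      have hw := h w (by simp)
      have hwne : w ≠ [] := hw.1
      have hwpos : 0 < w.length := length_pos_iff.2 hwne
      have hrest : ∀ x ∈ rest, IsLyndon x ∧ ¬ LexLt w x := by
        intro x hx
        refine ⟨h x (by simp [hx]), ?_⟩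
        haveI : IsTrans (List α) (fun a b => ¬ LexLt a b) :=
          ⟨fun _ _ _ h1 h2 => nlt_trans' h2 h1⟩
        have hpw : Pairwise (fun a b => ¬ LexLt a b) (w :: rest) :=
          List.isChain_iff_pairwise.1 hc
        exact (pairwise_cons.1 hpw).1 x hx
      have hTne : (w :: rest).flatten ≠ [] := by
        simp only [flatten_cons]
        intro hh
        exact hwne (append_eq_nil_iff.1 hh).1
      rw [flatten_cons, lynGo]
      rw [if_neg (by rw [← flatten_cons]; exact hTne)]
      rw [lynPrefixLen_eq hw rest hrest]
      rw [max_eq_right hwpos]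
      rw [take_left, drop_left]
      congr 1
      apply ih rest (fun x hx => h x (by simp [hx])) hc.tail
      simp only [flatten_cons, length_append] at hlen
      omega
omit [LinearOrder α] in
lemma pow_aux (a : α) (v : List α) : ∀ k : ℕ,
    (replicate k (a :: v)).flatten ++ [a] = a :: (replicate k (v ++ [a])).flatten := by
  intro k
  induction k with
  | zero => simp
  | succ k ih =>
    rw [replicate_succ, flatten_cons, append_assoc, ih, replicate_succ, flatten_cons]
    simp

omit [LinearOrder α] in
lemma pow_rotate_one (k : ℕ) (u : List α) :
    ∃ u' : List α, ((replicate k u).flatten).rotate 1 = (replicate k u').flatten ∧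
      u'.length = u.length := by
  cases u with
  | nil => exact ⟨[], by simp, rfl⟩
  | cons a v =>
    refine ⟨v ++ [a], ?_, by simp⟩
    cases k with
    | zero => simp
    | succ k =>
      rw [replicate_succ, flatten_cons, cons_append, rotate_cons_succ, rotate_zero,
        append_assoc, pow_aux, replicate_succ, flatten_cons]
      simp

omit [LinearOrder α] in
lemma pow_rotate (j k : ℕ) (u : List α) :
    ∃ u' : List α, ((replicate k u).flatten).rotate j = (replicate k u').flatten ∧
      u'.length = u.length := by
  induction j with
  | zero => exact ⟨u, by simp, rfl⟩
  | succ j ih =>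
    obtain ⟨u', h1, h2⟩ := ih
    obtain ⟨u'', h3, h4⟩ := pow_rotate_one k u'
    refine ⟨u'', ?_, by omega⟩
    have : (replicate k u).flatten.rotate (j + 1) =
        ((replicate k u).flatten.rotate j).rotate 1 := by
      rw [rotate_rotate]
    rw [this, h1, h3]

omit [LinearOrder α] in
lemma primitive_rotate {w : List α} (hw : IsPrimitive w) (i : ℕ) :
    IsPrimitive (w.rotate i) := by
  constructor
  · intro h
    have := congrArg List.length h
    simp only [length_rotate, length_nil] at this
    exact hw.1 (by simpa [length_eq_zero_iff] using this)
  · intro u k hk heq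
    set n := w.length with hn
    have hnpos : 0 < n := length_pos_iff.2 hw.1
    have hback : w = (w.rotate i).rotate (n - i % n) := by
      rw [rotate_rotate, ← rotate_mod]
      have : (i + (n - i % n)) % n = 0 := by
        have h1 : i % n ≤ n := le_of_lt (Nat.mod_lt _ hnpos)
        have h2 : i + (n - i % n) = n * (i / n) + n := by
          have := Nat.mod_add_div i n
          omega
        rw [h2]
        simp [Nat.add_mul_mod_self_left, Nat.mul_mod_right]
      rw [this, rotate_zero]
    rw [heq] at hback
    obtain ⟨u', h1, _⟩ := pow_rotate (n - i % n) k u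
    exact hw.2 u' k hk (hback.trans h1)

omit [LinearOrder α] in
lemma conj_list_eq (x : List α) :
    (List.range x.length).map (fun i => x.drop i ++ x.take i)
      = (List.range x.length).map (fun i => x.rotate i) := by
  apply List.map_congr_left
  intro i hi
  rw [List.mem_range] at hi
  rw [rotate_eq_drop_append_take (le_of_lt hi)]

omit [LinearOrder α] in
lemma rotate_index_perm (n j : ℕ) (hn : 0 < n) :
    ((List.range n).map (fun i => (j + i) % n)).Perm (List.range n) := by
  apply List.Subperm.perm_of_length_le
  · apply List.subperm_of_subset
    · apply List.Nodup.map_on ?_ (List.nodup_range (n := n))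
      intro i₁ h₁ i₂ h₂ heq
      rw [List.mem_range] at h₁ h₂
      have : i₁ % n = i₂ % n := by
        have h1 : (j + i₁) % n = (j + i₂) % n := heq
        have h2 : (j % n + i₁ % n) % n = (j % n + i₂ % n) % n := by
          rwa [Nat.mod_add_mod, Nat.add_mod_mod, Nat.mod_add_mod, Nat.add_mod_mod]
        have := Nat.ModEq.add_left_cancel' j h1
        exact this
      rwa [Nat.mod_eq_of_lt h₁, Nat.mod_eq_of_lt h₂] at this
    · intro a ha
      obtain ⟨i, _, rfl⟩ := List.mem_map.1 ha
      exact List.mem_range.2 (Nat.mod_lt _ hn)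
  · simp

omit [LinearOrder α] in
lemma conj_rotate_perm (w : List α) (j : ℕ) (hn : 0 < w.length) :
    ((List.range w.length).map (fun i => (w.rotate j).rotate i)).Perm
      ((List.range w.length).map (fun i => w.rotate i)) := by
  set n := w.length
  have h1 : (List.range n).map (fun i => (w.rotate j).rotate i)
      = ((List.range n).map (fun i => (j + i) % n)).map (fun i => w.rotate i) := by
    rw [List.map_map]
    apply List.map_congr_left
    intro i _
    simp only [Function.comp_apply]
    rw [rotate_rotate, rotate_mod]
  rw [h1]
  exact (rotate_index_perm n j hn).map _
lemma infLexLt_trans {u v w : ℕ → α} (h1 : InfLexLt u v) (h2 : InfLexLt v w) :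
    InfLexLt u w := by
  obtain ⟨n1, hn1, hlt1⟩ := h1
  obtain ⟨n2, hn2, hlt2⟩ := h2
  refine ⟨min n1 n2, fun m hm => ?_, ?_⟩
  · rw [hn1 m (lt_of_lt_of_le hm (min_le_left _ _)), hn2 m (lt_of_lt_of_le hm (min_le_right _ _))]
  · rcases lt_trichotomy n1 n2 with h | h | h
    · rw [min_eq_left (le_of_lt h)]
      rw [← hn2 n1 h]
      exact hlt1
    · rw [h, min_self]
      exact lt_trans (h ▸ hlt1) hlt2
    · rw [min_eq_right (le_of_lt h)]
      rw [hn1 n2 h]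
      exact hlt2

lemma infLexLt_asymm {u v : ℕ → α} (h1 : InfLexLt u v) (h2 : InfLexLt v u) : False := by
  obtain ⟨n1, hn1, hlt1⟩ := h1
  obtain ⟨n2, hn2, hlt2⟩ := h2
  rcases lt_trichotomy n1 n2 with h | h | h
  · rw [hn2 n1 h] at hlt1; exact lt_irrefl _ hlt1
  · subst h; exact lt_irrefl _ (lt_trans hlt1 hlt2)
  · rw [hn1 n2 h] at hlt2; exact lt_irrefl _ hlt2

lemma infLexLt_eq_of_not {u v : ℕ → α} (h1 : ¬ InfLexLt u v) (h2 : ¬ InfLexLt v u) :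
    u = v := by
  by_contra hne
  have hex : ∃ n, u n ≠ v n := by
    by_contra hall
    push_neg at hall
    exact hne (funext hall)
  classical
  set n0 := Nat.find hex with hn0
  have hmin : ∀ m < n0, u m = v m := fun m hm => by
    have := Nat.find_min hex hm
    push_neg at this
    exact this
  rcases lt_trichotomy (u n0) (v n0) with h | h | h
  · exact h1 ⟨n0, hmin, h⟩
  · exact (Nat.find_spec hex) h
  · exact h2 ⟨n0, fun m hm => (hmin m hm).symm, h⟩

lemma omegaWord_eq_list [Inhabited α] {a : List α} (ha : a ≠ []) :
    a = (List.range a.length).map (omegaWord a) := by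
  apply List.ext_getElem
  · simp
  · intro i h1 h2
    simp only [List.getElem_map, List.getElem_range]
    rw [omegaWord, Nat.mod_eq_of_lt h1, List.getD_eq_getElem _ _ h1]

lemma omegaWord_period [Inhabited α] (a : List α) (i : ℕ) :
    omegaWord a (i + a.length) = omegaWord a i := by
  rw [omegaWord, omegaWord, Nat.add_mod_right]

omit [LinearOrder α] in
lemma period_mul {u : ℕ → α} {g : ℕ} (hp : ∀ i, u (i + g) = u i) :
    ∀ (q i : ℕ), u (i + g * q) = u i := by
  intro q
  induction q with
  | zero => simp
  | succ q ih =>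
    intro i
    have : i + g * (q + 1) = (i + g * q) + g := by ring
    rw [this, hp, ih]

omit [LinearOrder α] in
lemma period_gcd {u : ℕ → α} : ∀ (m n : ℕ), (∀ i, u (i + m) = u i) → (∀ i, u (i + n) = u i) →
    ∀ i, u (i + Nat.gcd m n) = u i := by
  intro m n
  induction m, n using Nat.gcd.induction with
  | H0 n => intro _ h2; simpa using h2
  | H1 m n hm ih =>
    intro h1 h2
    rw [Nat.gcd_rec]
    apply ih ?_ h1
    intro i
    have heq : i + n % m + m * (n / m) = i + n := by
      have := Nat.mod_add_div n m
      omega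
    calc u (i + n % m) = u (i + n % m + m * (n / m)) := (period_mul h1 _ _).symm
      _ = u (i + n) := by rw [heq]
      _ = u i := h2 i

omit [LinearOrder α] in
lemma period_pow {u : ℕ → α} {g : ℕ} (hg : 0 < g) (hp : ∀ i, u (i + g) = u i) :
    ∀ t : ℕ, (List.range (t * g)).map u = (List.replicate t ((List.range g).map u)).flatten := by
  intro t
  induction t with
  | zero => simp
  | succ t ih =>
    have h1 : (t + 1) * g = t * g + g := by ring
    rw [h1, List.range_add, List.map_append, ih, List.map_map]
    have h2 : (List.range g).map (u ∘ (t * g + ·)) = (List.range g).map u := by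
      apply List.map_congr_left
      intro i _
      simp only [Function.comp_apply]
      have : t * g + i = i + g * t := by ring
      rw [this, period_mul hp]
    rw [h2, List.replicate_succ', List.flatten_append]
    simp

lemma eq_of_omega_eq [Inhabited α] {a b : List α} (hpa : IsPrimitive a) (hpb : IsPrimitive b)
    (h : omegaWord a = omegaWord b) : a = b := by
  have hane : a ≠ [] := hpa.1
  have hbne : b ≠ [] := hpb.1
  set m := a.length with hm
  set n := b.length with hn
  have hmpos : 0 < m := length_pos_iff.2 hane
  have hnpos : 0 < n := length_pos_iff.2 hbne
  have hPm : ∀ i, omegaWord a (i + m) = omegaWord a i := fun i => omegaWord_period a i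
  have hPn : ∀ i, omegaWord a (i + n) = omegaWord a i := fun i => by
    rw [h]; exact omegaWord_period b i
  set g := Nat.gcd m n with hg
  have hPg : ∀ i, omegaWord a (i + g) = omegaWord a i := period_gcd m n hPm hPn
  have hgpos : 0 < g := Nat.gcd_pos_of_pos_left _ hmpos
  have hgm : g ∣ m := Nat.gcd_dvd_left _ _
  have hgn : g ∣ n := Nat.gcd_dvd_right _ _
  have key : ∀ c : List α, IsPrimitive c → c = (List.range c.length).map (omegaWord a) →
      g ∣ c.length → g ≠ c.length → False := by
    intro c hpc hceq hdvd hne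
    obtain ⟨t, ht⟩ := hdvd
    have hcpos : 0 < c.length := length_pos_iff.2 hpc.1
    have ht2 : 2 ≤ t := by
      rcases Nat.lt_or_ge t 2 with h' | h'
      · interval_cases t <;> omega
      · exact h'
    apply hpc.2 ((List.range g).map (omegaWord a)) t ht2
    rw [hceq, ht, Nat.mul_comm, period_pow hgpos hPg]
  by_cases hmn : m = n
  · rw [omegaWord_eq_list hane, omegaWord_eq_list hbne, ← h, ← hm, ← hn, hmn]
  · exfalso
    by_cases hgm' : g = m
    · have hgn' : g ≠ n := fun hh => hmn (hgm' ▸ hh ▸ rfl)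
      refine key b hpb ?_ (hn ▸ hgn) hgn'
      rw [h]
      exact omegaWord_eq_list hbne
    · refine key a hpa ?_ (hm ▸ hgm) hgm'
      rw [← hm]
      exact omegaWord_eq_list hane

omit [LinearOrder α] in
lemma sorted_perm_eq {β : Type*} {r : β → β → Bool} : ∀ {l₁ l₂ : List β}, l₁.Perm l₂ →
    l₁.Pairwise (r · ·) → l₂.Pairwise (r · ·) →
    (∀ a ∈ l₁, ∀ b ∈ l₁, r a b → r b a → a = b) → l₁ = l₂ := by
  intro l₁
  induction l₁ with
  | nil => intro l₂ hp _ _ _; exact (hp.nil_eq).symm ▸ rfl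
  | cons a t₁ ih =>
    intro l₂ hp hs₁ hs₂ hanti
    cases l₂ with
    | nil => exact absurd hp.symm.nil_eq (by simp)
    | cons b t₂ =>
      have hab : a = b := by
        by_cases h : a = b
        · exact h
        · have ha2 : a ∈ b :: t₂ := hp.mem_iff.1 (by simp)
          have hb1 : b ∈ a :: t₁ := hp.symm.mem_iff.1 (by simp)
          have ha2' : a ∈ t₂ := by
            rcases mem_cons.1 ha2 with h' | h'
            · exact absurd h' h
            · exact h'
          have hb1' : b ∈ t₁ := by
            rcases mem_cons.1 hb1 with h' | h'
            · exact absurd h'.symm h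
            · exact h'
          have hrab : r a b := (pairwise_cons.1 hs₁).1 b hb1'
          have hrba : r b a := (pairwise_cons.1 hs₂).1 a ha2'
          exact hanti a (by simp) b (by simp [hb1']) hrab hrba
      subst hab
      have hperm' : t₁.Perm t₂ := hp.cons_inv
      rw [ih hperm' (pairwise_cons.1 hs₁).2 (pairwise_cons.1 hs₂).2
        (fun x hx y hy => hanti x (by simp [hx]) y (by simp [hy]))]

open Classical in
lemma omegaLt_bool_trans [Inhabited α] (a b c : List α)
    (h1 : decide (¬ OmegaLt b a) = true) (h2 : decide (¬ OmegaLt c b) = true) :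
    decide (¬ OmegaLt c a) = true := by
  rw [decide_eq_true_iff] at *
  intro hca
  by_cases hbc : OmegaLt b c
  · exact h1 (infLexLt_trans hbc hca)
  · have heq : omegaWord b = omegaWord c := infLexLt_eq_of_not hbc h2
    apply h1
    unfold OmegaLt at hca ⊢
    rw [heq]
    exact hca

open Classical in
lemma omegaLt_bool_total [Inhabited α] (a b : List α) :
    (decide (¬ OmegaLt b a) || decide (¬ OmegaLt a b)) = true := by
  rcases Classical.em (OmegaLt b a) with h | h
  · simp only [Bool.or_eq_true, decide_eq_true_iff]
    right
    intro h'
    exact infLexLt_asymm h h'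
  · simp [h]

/-- Let `S` be a finite nonempty multiset (given as a list) of primitive strings, for
each `w ∈ S` let `v w` be the unique conjugate of `w` that is a Lyndon word, and let `T`
be the concatenation of the strings `v w` (with multiplicity) arranged in
`≺_lex`-non-increasing order.  Then `BBWT(T) = eBWT(S)`. -/
theorem bbwt_eq_ebwt [Inhabited α]
    (S : List (List α)) (hS : S ≠ [])
    (hprim : ∀ w ∈ S, IsPrimitive w)
    (v : List α → List α)
    (hv : ∀ w ∈ S, (∃ i < w.length, v w = w.drop i ++ w.take i) ∧ IsLyndon (v w))
    (L : List (List α)) (hperm : L.Perm (S.map v))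
    (hsort : L.Chain' (fun a b => ¬ List.Lex (· < ·) a b)) :
    BBWT L.flatten = eBWT S := by
  classical
  have hL : ∀ x ∈ L, ∃ w ∈ S, x = v w := by
    intro x hx
    have hx' : x ∈ S.map v := hperm.mem_iff.1 hx
    obtain ⟨w, hw, hwx⟩ := List.mem_map.1 hx'
    exact ⟨w, hw, hwx.symm⟩
  have hLyn : ∀ x ∈ L, IsLyndon x := by
    intro x hx
    obtain ⟨w, hw, rfl⟩ := hL x hx
    exact (hv w hw).2
  have hfact : lyndonFactorization L.flatten = L := by
    unfold lyndonFactorization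
    exact lynGo_flatten _ L hLyn hsort le_rfl
  unfold BBWT eBWT
  rw [hfact]
  set f : List α → List (List α) :=
    fun w => (List.range w.length).map (fun i => w.drop i ++ w.take i) with hf
  have hrotf : ∀ w ∈ S, (f (v w)).Perm (f w) := by
    intro w hw
    obtain ⟨⟨i, hi, hvi⟩, _⟩ := hv w hw
    have hwne := (hprim w hw).1
    have hn : 0 < w.length := length_pos_iff.2 hwne
    have hviro : v w = w.rotate i := by
      rw [hvi, rotate_eq_drop_append_take (le_of_lt hi)]
    rw [hf]
    simp only
    rw [conj_list_eq (v w), conj_list_eq w, hviro, length_rotate]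
    exact conj_rotate_perm w i hn
  have hAB : (L.flatMap f).Perm (S.flatMap f) := by
    refine (hperm.flatMap_right f).trans ?_
    rw [List.flatMap_map]
    exact List.Perm.flatMap_left S (fun w hw => hrotf w hw)
  have hprimB : ∀ x ∈ S.flatMap f, IsPrimitive x := by
    intro x hx
    rw [List.mem_flatMap] at hx
    obtain ⟨w, hw, hxw⟩ := hx
    rw [hf] at hxw
    simp only [List.mem_map, List.mem_range] at hxw
    obtain ⟨i, hi, rfl⟩ := hxw
    rw [← rotate_eq_drop_append_take (le_of_lt hi)]
    exact primitive_rotate (hprim w hw) i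
  have hMA := List.pairwise_mergeSort (le := fun a b => decide (¬ OmegaLt b a))
    (fun a b c => omegaLt_bool_trans a b c) (fun a b => omegaLt_bool_total a b) (L.flatMap f)
  have hMB := List.pairwise_mergeSort (le := fun a b => decide (¬ OmegaLt b a))
    (fun a b c => omegaLt_bool_trans a b c) (fun a b => omegaLt_bool_total a b) (S.flatMap f)
  have hperm2 : ((L.flatMap f).mergeSort (fun a b => decide (¬ OmegaLt b a))).Perm
      ((S.flatMap f).mergeSort (fun a b => decide (¬ OmegaLt b a))) :=
    ((List.mergeSort_perm _ _).trans hAB).trans (List.mergeSort_perm _ _).symm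
  have heq : (L.flatMap f).mergeSort (fun a b => decide (¬ OmegaLt b a))
      = (S.flatMap f).mergeSort (fun a b => decide (¬ OmegaLt b a)) := by
    apply sorted_perm_eq hperm2 hMA hMB
    intro a ha b hb hab hba
    have ha' : a ∈ S.flatMap f := hAB.mem_iff.1 ((List.mergeSort_perm _ _).mem_iff.1 ha)
    have hb' : b ∈ S.flatMap f := hAB.mem_iff.1 ((List.mergeSort_perm _ _).mem_iff.1 hb)
    have hpa := hprimB a ha'
    have hpb := hprimB b hb'
    rw [decide_eq_true_iff] at hab hba
    exact eq_of_omega_eq hpa hpb (infLexLt_eq_of_not hba hab)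
  rw [heq]
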